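/- Let R be a natural number and let u, v : ℝ² → ℝ be the polynomial functions u(x,y) = Σ_{r=0}^{R} Σ_{s=0}^{r} a_r^s x^{r-s} y^s and v(x,y) = Σ_{r=0}^{R} Σ_{s=0}^{r} A_r^s x^{r-s} y^s with real coefficients satisfying the Cauchy–Riemann equations (∂u/∂x = ∂v/∂y and ∂u/∂y = −∂v/∂x identically on ℝ²). Then for every 1 ≤ r ≤ R and every 0 ≤ s ≤ r: if s is even then a_r^s = (−1)^{s/2} · C(r,s) · a_r^0, and if s is odd then a_r^s = (−1)^{(s−1)/2} · (1/r) · C(r,s) · a_r^1, where C(r,s) is the binomial coefficient. -/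

import Mathlib

open Finset MvPolynomial

/-- Auxiliary bivariate polynomial built from a coefficient array. -/
noncomputable def stmt4Pol (R : ℕ) (c : ℕ → ℕ → ℝ) : MvPolynomial (Fin 2) ℝ :=
  ∑ r ∈ Finset.range (R + 1), ∑ s ∈ Finset.range r,
    monomial (Finsupp.single 0 (r - 1 - s) + Finsupp.single 1 s) (c r s)

lemma stmt4_eval_pol (R : ℕ) (c : ℕ → ℕ → ℝ) (g : Fin 2 → ℝ) :
    MvPolynomial.eval g (stmt4Pol R c) = ∑ r ∈ Finset.range (R + 1), ∑ s ∈ Finset.range r,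
      c r s * g 0 ^ (r - 1 - s) * g 1 ^ s := by
  simp only [stmt4Pol, map_sum, eval_monomial]
  refine Finset.sum_congr rfl fun r _ => Finset.sum_congr rfl fun s _ => ?_
  rw [Finsupp.prod_add_index (by simp) (by intros; rw [pow_add]),
    Finsupp.prod_single_index (by simp), Finsupp.prod_single_index (by simp)]
  ring

/-- If two bivariate polynomial expressions of this triangular shape agree as
functions, their coefficients agree. -/
lemma stmt4_coeff_ext (R : ℕ) (c d : ℕ → ℕ → ℝ)
    (h : ∀ x y : ℝ, (∑ r ∈ Finset.range (R + 1), ∑ s ∈ Finset.range r,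
        c r s * x ^ (r - 1 - s) * y ^ s)
      = ∑ r ∈ Finset.range (R + 1), ∑ s ∈ Finset.range r,
        d r s * x ^ (r - 1 - s) * y ^ s) :
    ∀ r ≤ R, ∀ s < r, c r s = d r s := by
  have hpq : stmt4Pol R c = stmt4Pol R d := by
    apply MvPolynomial.funext
    intro g
    rw [stmt4_eval_pol, stmt4_eval_pol]
    exact h (g 0) (g 1)
  intro r hr s hs
  have key : ∀ e : ℕ → ℕ → ℝ, MvPolynomial.coeff
      (Finsupp.single 0 (r - 1 - s) + Finsupp.single 1 s) (stmt4Pol R e) = e r s := by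
    intro e
    rw [stmt4Pol, MvPolynomial.coeff_sum, Finset.sum_eq_single r]
    · rw [MvPolynomial.coeff_sum, Finset.sum_eq_single s]
      · simp [MvPolynomial.coeff_monomial]
      · intro s' hs' hne
        rw [MvPolynomial.coeff_monomial, if_neg]
        intro heq
        exact hne (by simpa using congrArg (fun f => f 1) heq)
      · intro habs
        exact absurd (Finset.mem_range.2 hs) habs
    · intro r' hr' hne
      rw [MvPolynomial.coeff_sum]
      apply Finset.sum_eq_zero
      intro s' hs'
      rw [MvPolynomial.coeff_monomial, if_neg]
      intro heq
      have h1 : s' = s := by simpa using congrArg (fun f => f 1) heq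
      have h0 : r' - 1 - s' = r - 1 - s := by simpa using congrArg (fun f => f 0) heq
      have hs'r' : s' < r' := Finset.mem_range.1 hs'
      exact hne (by omega)
    · intro habs
      exact absurd (Finset.mem_range.2 (by omega)) habs
  have := congrArg (MvPolynomial.coeff (Finsupp.single 0 (r - 1 - s) + Finsupp.single 1 s)) hpq
  rwa [key, key] at this

lemma stmt4_deriv_fst (R : ℕ) (a : ℕ → ℕ → ℝ) (x y : ℝ) :
    deriv (fun t => ∑ r ∈ Finset.range (R + 1), ∑ s ∈ Finset.range (r + 1),
        a r s * t ^ (r - s) * y ^ s) x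
    = ∑ r ∈ Finset.range (R + 1), ∑ s ∈ Finset.range (r + 1),
        a r s * (((r - s : ℕ) : ℝ) * x ^ (r - s - 1)) * y ^ s := by
  refine HasDerivAt.deriv ?_
  apply HasDerivAt.fun_sum
  intro r _
  apply HasDerivAt.fun_sum
  intro s _
  exact ((hasDerivAt_pow (r - s) x).const_mul (a r s)).mul_const (y ^ s)

lemma stmt4_deriv_snd (R : ℕ) (a : ℕ → ℕ → ℝ) (x y : ℝ) :
    deriv (fun t => ∑ r ∈ Finset.range (R + 1), ∑ s ∈ Finset.range (r + 1),
        a r s * x ^ (r - s) * t ^ s) y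
    = ∑ r ∈ Finset.range (R + 1), ∑ s ∈ Finset.range (r + 1),
        a r s * x ^ (r - s) * (((s : ℕ) : ℝ) * y ^ (s - 1)) := by
  refine HasDerivAt.deriv ?_
  apply HasDerivAt.fun_sum
  intro r _
  apply HasDerivAt.fun_sum
  intro s _
  exact (hasDerivAt_pow s y).const_mul (a r s * x ^ (r - s))

lemma stmt4_transfoA (R : ℕ) (c : ℕ → ℕ → ℝ) (x y : ℝ) :
    (∑ r ∈ Finset.range (R + 1), ∑ s ∈ Finset.range (r + 1),
        c r s * (((r - s : ℕ) : ℝ) * x ^ (r - s - 1)) * y ^ s)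
    = ∑ r ∈ Finset.range (R + 1), ∑ s ∈ Finset.range r,
        (c r s * ((r - s : ℕ) : ℝ)) * x ^ (r - 1 - s) * y ^ s := by
  refine Finset.sum_congr rfl fun r _ => ?_
  rw [Finset.sum_range_succ]
  have h0 : c r r * (((r - r : ℕ) : ℝ) * x ^ (r - r - 1)) * y ^ r = 0 := by simp
  rw [h0, add_zero]
  refine Finset.sum_congr rfl fun s hs => ?_
  rw [show r - s - 1 = r - 1 - s by omega]
  ring

lemma stmt4_transfoB (R : ℕ) (c : ℕ → ℕ → ℝ) (x y : ℝ) :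
    (∑ r ∈ Finset.range (R + 1), ∑ s ∈ Finset.range (r + 1),
        c r s * x ^ (r - s) * (((s : ℕ) : ℝ) * y ^ (s - 1)))
    = ∑ r ∈ Finset.range (R + 1), ∑ s ∈ Finset.range r,
        (c r (s + 1) * ((s + 1 : ℕ) : ℝ)) * x ^ (r - 1 - s) * y ^ s := by
  refine Finset.sum_congr rfl fun r _ => ?_
  rw [Finset.sum_range_succ']
  have h0 : c r 0 * x ^ (r - 0) * (((0 : ℕ) : ℝ) * y ^ (0 - 1)) = 0 := by simp
  rw [h0, add_zero]
  refine Finset.sum_congr rfl fun s hs => ?_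
  rw [show r - (s + 1) = r - 1 - s by omega, show s + 1 - 1 = s by omega]
  push_cast
  ring

/-- Under the Cauchy–Riemann equations, for `1 ≤ r ≤ R` and
`0 ≤ s ≤ r`: if `s` is even then `a_r^s = (−1)^{s/2}·C(r,s)·a_r^0`, and if `s`
is odd then `a_r^s = (−1)^{(s−1)/2}·(1/r)·C(r,s)·a_r^1`. -/
theorem stmt_4 (R : ℕ) (a A : ℕ → ℕ → ℝ) (u v : ℝ → ℝ → ℝ)
    (hu : ∀ x y : ℝ, u x y =
      ∑ r ∈ Finset.range (R + 1), ∑ s ∈ Finset.range (r + 1),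
        a r s * x ^ (r - s) * y ^ s)
    (hv : ∀ x y : ℝ, v x y =
      ∑ r ∈ Finset.range (R + 1), ∑ s ∈ Finset.range (r + 1),
        A r s * x ^ (r - s) * y ^ s)
    (hCR1 : ∀ x y : ℝ, deriv (fun t => u t y) x = deriv (fun t => v x t) y)
    (hCR2 : ∀ x y : ℝ, deriv (fun t => u x t) y = - deriv (fun t => v t y) x) :
    ∀ r s : ℕ, 1 ≤ r → r ≤ R → s ≤ r →
      (Even s → a r s = (-1 : ℝ) ^ (s / 2) * (r.choose s : ℝ) * a r 0) ∧
      (Odd s → a r s = (-1 : ℝ) ^ ((s - 1) / 2) * (1 / (r : ℝ)) * (r.choose s : ℝ) * a r 1) := by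
  -- coefficient identities from the two CR equations
  have key1 : ∀ r ≤ R, ∀ s < r,
      a r s * ((r - s : ℕ) : ℝ) = A r (s + 1) * ((s + 1 : ℕ) : ℝ) := by
    apply stmt4_coeff_ext R
    intro x y
    have h := hCR1 x y
    simp only [hu, hv] at h
    rw [stmt4_deriv_fst R a x y, stmt4_deriv_snd R A x y,
      stmt4_transfoA R a x y, stmt4_transfoB R A x y] at h
    exact h
  have key2 : ∀ r ≤ R, ∀ s < r,
      a r (s + 1) * ((s + 1 : ℕ) : ℝ) = -(A r s * ((r - s : ℕ) : ℝ)) := by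
    apply stmt4_coeff_ext R
    intro x y
    have h := hCR2 x y
    simp only [hu, hv] at h
    rw [stmt4_deriv_snd R a x y, stmt4_deriv_fst R A x y,
      stmt4_transfoB R a x y, stmt4_transfoA R A x y, ← Finset.sum_neg_distrib] at h
    rw [h]
    refine Finset.sum_congr rfl fun r _ => ?_
    rw [← Finset.sum_neg_distrib]
    refine Finset.sum_congr rfl fun s _ => ?_
    ring
  intro r s hr hrR
  -- the two-step recurrence
  have hK : ∀ s : ℕ, s + 2 ≤ r →
      a r (s + 2) * (((s : ℝ) + 2) * ((s : ℝ) + 1))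
        = -(a r s * (((r : ℝ) - s) * ((r : ℝ) - s - 1))) := by
    intro s hs
    have k2 := key2 r hrR (s + 1) (by omega)
    have k1 := key1 r hrR s (by omega)
    have e1 : ((r - (s + 1) : ℕ) : ℝ) = (r : ℝ) - s - 1 := by
      rw [Nat.cast_sub (by omega)]; push_cast; ring
    have e2 : ((r - s : ℕ) : ℝ) = (r : ℝ) - s := by
      rw [Nat.cast_sub (by omega)]
    rw [e1] at k2
    rw [e2] at k1
    push_cast at k1 k2
    linear_combination ((s : ℝ) + 1) * k2 + ((r : ℝ) - s - 1) * k1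
  -- the binomial identity
  have hC : ∀ s : ℕ, s + 2 ≤ r →
      (r.choose (s + 2) : ℝ) * (((s : ℝ) + 2) * ((s : ℝ) + 1))
        = (r.choose s : ℝ) * (((r : ℝ) - s) * ((r : ℝ) - s - 1)) := by
    intro s hs
    have c1n := Nat.choose_succ_right_eq r s
    have c2n := Nat.choose_succ_right_eq r (s + 1)
    have c1 : (r.choose (s + 1) : ℝ) * ((s : ℝ) + 1) = (r.choose s : ℝ) * ((r : ℝ) - s) := by
      have := congrArg (Nat.cast (R := ℝ)) c1n
      rw [Nat.cast_mul, Nat.cast_mul, Nat.cast_sub (by omega)] at this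
      push_cast at this
      linarith
    have c2 : (r.choose (s + 2) : ℝ) * ((s : ℝ) + 2)
        = (r.choose (s + 1) : ℝ) * ((r : ℝ) - s - 1) := by
      have := congrArg (Nat.cast (R := ℝ)) c2n
      rw [Nat.cast_mul, Nat.cast_mul, Nat.cast_sub (by omega)] at this
      push_cast at this
      linarith
    linear_combination ((s : ℝ) + 1) * c2 + ((r : ℝ) - s - 1) * c1
  -- two-step strong induction on s
  induction s using Nat.strong_induction_on with
  | _ s ih =>
    obtain _ | s := s
    · intro _
      constructor
      · intro _; simp
      · intro h; exact absurd h (by simp)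
    obtain _ | s := s
    · intro _
      constructor
      · intro h; exact absurd h (by simp)
      · intro _
        rw [Nat.choose_one_right]
        have hr0 : (r : ℝ) ≠ 0 := by positivity
        field_simp
        simp
    · intro hs
      have hs' : s + 2 ≤ r := by omega
      have ihs := ih s (by omega) (by omega)
      have hKs := hK s hs'
      have hCs := hC s hs'
      constructor
      · intro hpar
        have heven : Even s := by
          rcases hpar with ⟨k, hk⟩; exact ⟨k - 1, by omega⟩
        have ihe := ihs.1 heven
        rw [show (s + 2) / 2 = s / 2 + 1 by omega, pow_succ]
        have hne : (((s : ℝ) + 2) * ((s : ℝ) + 1)) ≠ 0 := by positivity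
        refine mul_right_cancel₀ hne ?_
        linear_combination hKs - (((r : ℝ) - s) * ((r : ℝ) - s - 1)) * ihe
          + ((-1 : ℝ) ^ (s / 2) * a r 0) * hCs
      · intro hpar
        have hodd : Odd s := by
          rcases hpar with ⟨k, hk⟩; exact ⟨k - 1, by omega⟩
        obtain ⟨k, hk⟩ := hodd
        have iho := ihs.2 ⟨k, hk⟩
        rw [show (s + 2 - 1) / 2 = (s - 1) / 2 + 1 by omega, pow_succ]
        have hne : (((s : ℝ) + 2) * ((s : ℝ) + 1)) ≠ 0 := by positivity
        refine mul_right_cancel₀ hne ?_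
        linear_combination hKs - (((r : ℝ) - s) * ((r : ℝ) - s - 1)) * iho
          + ((-1 : ℝ) ^ ((s - 1) / 2) * (1 / (r : ℝ)) * a r 1) * hCs
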